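/- Let b be an integer that is not a perfect cube (in particular b ≠ 0), let K be any quadratic field, and let E be the elliptic curve y² = x³ + b² over K. Then E(K) contains no point of order 2. -/

import Mathlib

/-- The Weierstrass curve `y² = x³ + a` over `K`, i.e. with coefficients
`a₁ = a₂ = a₃ = a₄ = 0`, `a₆ = a`. -/
def curveE {K : Type*} [Field K] (a : K) : WeierstrassCurve K :=
  ⟨0, 0, 0, 0, a⟩

open Polynomial

/-- A degree-one polynomial over a field has a root. -/
lemma root_of_natDegree_eq_one {F : Type*} [Field F] {p : F[X]} (hp : p.natDegree = 1) :
    ∃ r : F, p.eval r = 0 := by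
  have h1 : p = C (p.coeff 1) * X + C (p.coeff 0) := eq_X_add_C_of_natDegree_le_one hp.le
  have hp0 : p ≠ 0 := fun h => by simp [h] at hp
  have hc : p.coeff 1 ≠ 0 := by
    have := Polynomial.leadingCoeff_ne_zero.mpr hp0
    rwa [leadingCoeff, hp] at this
  refine ⟨-p.coeff 0 / p.coeff 1, ?_⟩
  conv_lhs => arg 2; rw [h1]
  simp only [eval_add, eval_mul, eval_C, eval_X]
  field_simp
  ring

lemma no_cube_root (b : ℤ) (hb : ∀ c : ℤ, b ≠ c ^ 3) {K : Type*} [Field K] [NumberField K]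
    (hK : Module.finrank ℚ K = 2) (x : K) : x ^ 3 ≠ -(b : K) ^ 2 := by
  intro hx
  set q : ℚ[X] := X ^ 3 + C ((b : ℚ) ^ 2) with hq
  have hint : IsIntegral ℚ x := IsIntegral.of_finite ℚ x
  have haev : Polynomial.aeval x q = 0 := by
    simp only [hq, map_add, map_pow, aeval_X, aeval_C]
    rw [map_intCast, hx]; ring
  have hdvd : minpoly ℚ x ∣ q := minpoly.dvd ℚ x haev
  obtain ⟨s, hs⟩ := hdvd
  have hqdeg : q.natDegree = 3 := by
    rw [hq]; compute_degree!
  have hq0 : q ≠ 0 := fun h => by simp [h] at hqdeg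
  have hp0 : minpoly ℚ x ≠ 0 := minpoly.ne_zero hint
  have hs0 : s ≠ 0 := fun h => by simp [h, hs] at hq0
  have hsum : (minpoly ℚ x).natDegree + s.natDegree = 3 := by
    rw [← hqdeg, hs, natDegree_mul hp0 hs0]
  have hdeg2 : (minpoly ℚ x).natDegree ∣ 2 := hK ▸ minpoly.degree_dvd hint
  have hdegpos : 0 < (minpoly ℚ x).natDegree := minpoly.natDegree_pos hint
  -- rational root
  obtain ⟨r, hr⟩ : ∃ r : ℚ, q.eval r = 0 := by
    have hle : (minpoly ℚ x).natDegree ≤ 2 := Nat.le_of_dvd two_pos hdeg2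
    have h12 : (minpoly ℚ x).natDegree = 1 ∨ s.natDegree = 1 := by omega
    rcases h12 with h | h
    · obtain ⟨r, hr⟩ := root_of_natDegree_eq_one h
      exact ⟨r, by rw [hs, eval_mul, hr, zero_mul]⟩
    · obtain ⟨r, hr⟩ := root_of_natDegree_eq_one h
      exact ⟨r, by rw [hs, eval_mul, hr, mul_zero]⟩
  have hrr : ((b : ℚ)) ^ 2 = (-r) ^ 3 := by
    simp only [hq, eval_add, eval_pow, eval_X, eval_C] at hr
    ring_nf
    linarith [hr]
  obtain ⟨c, hc, -⟩ := (pow_eq_pow_iff_of_coprime (by norm_num : Nat.Coprime 2 3)).mp hrr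
  have hcint : IsIntegral ℤ c := by
    refine ⟨X ^ 3 - C b, monic_X_pow_sub_C b (by norm_num), ?_⟩
    show (Polynomial.aeval c) ((X : ℤ[X]) ^ 3 - C b) = 0
    rw [map_sub, map_pow, aeval_X, aeval_C, eq_intCast, ← hc, sub_self]
  obtain ⟨d, hd⟩ := IsIntegrallyClosed.isIntegral_iff.mp hcint
  refine hb d ?_
  have : (b : ℚ) = (d : ℚ) ^ 3 := by rw [hc, ← hd]; rfl
  exact_mod_cast this


open Classical in
/-- Let `b` be an integer that is not a perfect cube (in particular `b ≠ 0`), let `K`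
be any quadratic field, and let `E` be the elliptic curve `y² = x³ + b²` over `K`.
Then `E(K)` contains no point of order `2`. -/
theorem no_order_two_point (b : ℤ) (hb : ∀ c : ℤ, b ≠ c ^ 3) (K : Type*) [Field K]
    [NumberField K] (hK : Module.finrank ℚ K = 2) :
    ∀ P : (curveE ((b : K) ^ 2)).toAffine.Point, addOrderOf P ≠ 2 := by
  intro P hP
  have hP0 : P ≠ 0 := by
    rintro rfl
    rw [addOrderOf_zero] at hP
    exact absurd hP (by norm_num)
  have h2 : P + P = 0 := by
    have h := addOrderOf_nsmul_eq_zero P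
    rw [hP, two_nsmul] at h
    exact h
  obtain (_ | @⟨x, y, h⟩) := P
  · exact hP0 rfl
  · have hneg := eq_neg_of_add_eq_zero_left h2
    rw [WeierstrassCurve.Affine.Point.neg_some] at hneg
    simp only [WeierstrassCurve.Affine.Point.some.injEq] at hneg
    have hy : y = (curveE ((b : K) ^ 2)).toAffine.negY x y := hneg.2
    rw [WeierstrassCurve.Affine.negY] at hy
    have ha1 : (curveE ((b : K) ^ 2)).toAffine.a₁ = 0 := rfl
    have ha3 : (curveE ((b : K) ^ 2)).toAffine.a₃ = 0 := rfl
    rw [ha1, ha3] at hy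
    have hy0 : y = 0 := by
      have h2y : (2 : K) * y = 0 := by linear_combination hy
      rcases mul_eq_zero.mp h2y with h' | h'
      · exact absurd h' two_ne_zero
      · exact h'
    have heq := (((curveE ((b : K) ^ 2)).toAffine.nonsingular_iff x y).mp h).1
    rw [WeierstrassCurve.Affine.equation_iff] at heq
    have ha2 : (curveE ((b : K) ^ 2)).toAffine.a₂ = 0 := rfl
    have ha4 : (curveE ((b : K) ^ 2)).toAffine.a₄ = 0 := rfl
    have ha6 : (curveE ((b : K) ^ 2)).toAffine.a₆ = (b : K) ^ 2 := rfl
    rw [ha1, ha2, ha3, ha4, ha6, hy0] at heq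
    exact no_cube_root b hb hK x (by linear_combination -heq)
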